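/- arXiv:1811.02709 — 2 statements merged into one kernel-verified Lean document; each statement's English description precedes it below -/
import Mathlib

section
/- (Morrey-to-L^∞ heat semigroup estimate) Let N ≥ 1 and 1 ≤ q₁ ≤ q < ∞. Then there exists a constant C > 0, depending only on N, q and q₁, such that ‖e^{tΔ} f‖_{L^∞} ≤ C t^{−N/(2q)} ‖f‖_{M^q_{q₁}} for all t > 0 and all f ∈ M^q_{q₁}(ℝ^N). -/
open MeasureTheory ENNReal

noncomputable section

/-- `ℝ^N` with the Euclidean structure. -/
abbrev Euc (N : ℕ) : Type := EuclideanSpace ℝ (Fin N)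

/-- The Morrey norm `‖f‖_{M^p_{p₁}}`. -/
noncomputable def morreyNorm (N : ℕ) (p p₁ : ℝ≥0∞) {F : Type*} [NormedAddCommGroup F]
    (f : Euc N → F) : ℝ≥0∞ :=
  ⨆ (x₀ : Euc N) (R : ℝ) (_ : 0 < R),
    ENNReal.ofReal (R ^ ((N : ℝ) / p.toReal - (N : ℝ) / p₁.toReal)) *
      eLpNorm f p₁ (volume.restrict (Metric.closedBall x₀ R))

/-- The Gaussian heat kernel on `ℝ^N`. -/
noncomputable def heatKernel (N : ℕ) (t : ℝ) (x : Euc N) : ℝ :=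
  (4 * Real.pi * t) ^ (-(N : ℝ) / 2) * Real.exp (-‖x‖ ^ 2 / (4 * t))

/-- The heat semigroup `e^{tΔ}` acting by convolution with the Gaussian heat kernel. -/
noncomputable def heatSemigroup (N : ℕ) (t : ℝ) {F : Type*} [NormedAddCommGroup F]
    [NormedSpace ℝ F] (f : Euc N → F) : Euc N → F :=
  fun x => ∫ y, heatKernel N t (x - y) • f y

lemma morrey_ball_bound (N : ℕ) {q q₁ : ℝ} (hq : 0 < q) (hq₁ : 0 < q₁)
    (f : Euc N → ℝ) (x : Euc N) {R : ℝ} (hR : 0 < R) :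
    eLpNorm f (ENNReal.ofReal q₁) (volume.restrict (Metric.closedBall x R)) ≤
      ENNReal.ofReal (R ^ ((N : ℝ) / q₁ - (N : ℝ) / q)) *
        morreyNorm N (ENNReal.ofReal q) (ENNReal.ofReal q₁) f := by
  set E := eLpNorm f (ENNReal.ofReal q₁) (volume.restrict (Metric.closedBall x R)) with hE
  have hmem : ENNReal.ofReal (R ^ ((N : ℝ) / q - (N : ℝ) / q₁)) * E ≤
      morreyNorm N (ENNReal.ofReal q) (ENNReal.ofReal q₁) f := by
    rw [morreyNorm, ENNReal.toReal_ofReal hq.le, ENNReal.toReal_ofReal hq₁.le]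
    exact le_iSup_of_le x (le_iSup_of_le R (le_iSup_of_le hR le_rfl))
  have hzero : (N : ℝ) / q₁ - (N : ℝ) / q + ((N : ℝ) / q - (N : ℝ) / q₁) = 0 := by ring
  have key : ENNReal.ofReal (R ^ ((N : ℝ) / q₁ - (N : ℝ) / q)) *
      (ENNReal.ofReal (R ^ ((N : ℝ) / q - (N : ℝ) / q₁)) * E) = E := by
    rw [← mul_assoc, ← ENNReal.ofReal_mul (by positivity), ← Real.rpow_add hR, hzero,
      Real.rpow_zero, ENNReal.ofReal_one, one_mul]
  calc E = _ := key.symm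
    _ ≤ _ := by gcongr

lemma l1_ball_bound (N : ℕ) {q q₁ : ℝ} (hq₁ : 1 ≤ q₁) (hq₁q : q₁ ≤ q)
    (f : Euc N → ℝ) (hf : Measurable f) (x : Euc N) {R : ℝ} (hR : 0 < R) :
    ∫⁻ y in Metric.closedBall x R, ‖f y‖₊ ∂volume ≤
      ENNReal.ofReal (R ^ ((N : ℝ) - (N : ℝ) / q)) *
        (volume (Metric.ball (0 : Euc N) 1) ^ (1 - 1 / q₁)) *
        morreyNorm N (ENNReal.ofReal q) (ENNReal.ofReal q₁) f := by
  have hq : 1 ≤ q := le_trans hq₁ hq₁q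
  have hq0 : 0 < q := by linarith
  have hq₁0 : 0 < q₁ := by linarith
  have hγ : 0 ≤ 1 - 1 / q₁ := by
    have : 1 / q₁ ≤ 1 := by rw [div_le_one hq₁0]; exact hq₁
    linarith
  have h1le : (1 : ℝ≥0∞) ≤ ENNReal.ofReal q₁ := by
    rw [← ENNReal.ofReal_one]; exact ENNReal.ofReal_le_ofReal hq₁
  have hHolder := eLpNorm_le_eLpNorm_mul_rpow_measure_univ (μ := volume.restrict (Metric.closedBall x R))
    h1le hf.aestronglyMeasurable (q := ENNReal.ofReal q₁)
  rw [eLpNorm_one_eq_lintegral_enorm, Measure.restrict_apply_univ] at hHolder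
  have hexp : 1 / (1 : ℝ≥0∞).toReal - 1 / (ENNReal.ofReal q₁).toReal = 1 - 1 / q₁ := by
    rw [ENNReal.toReal_one, ENNReal.toReal_ofReal hq₁0.le]; norm_num
  rw [hexp] at hHolder
  have hvol : volume (Metric.closedBall x R) =
      ENNReal.ofReal (R ^ (N : ℕ)) * volume (Metric.ball (0 : Euc N) 1) := by
    rw [Measure.addHaar_closedBall volume x hR.le, finrank_euclideanSpace_fin]
  have hvolpow : volume (Metric.closedBall x R) ^ (1 - 1 / q₁) =
      ENNReal.ofReal (R ^ ((N : ℝ) * (1 - 1 / q₁))) *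
        volume (Metric.ball (0 : Euc N) 1) ^ (1 - 1 / q₁) := by
    rw [hvol, ENNReal.mul_rpow_of_nonneg _ _ hγ]
    congr 1
    rw [← Real.rpow_natCast R N, ENNReal.ofReal_rpow_of_pos (Real.rpow_pos_of_pos hR _),
      ← Real.rpow_mul hR.le]
  calc ∫⁻ y in Metric.closedBall x R, ‖f y‖₊ ∂volume
      ≤ eLpNorm f (ENNReal.ofReal q₁) (volume.restrict (Metric.closedBall x R)) *
        volume (Metric.closedBall x R) ^ (1 - 1 / q₁) := hHolder
    _ ≤ (ENNReal.ofReal (R ^ ((N : ℝ) / q₁ - (N : ℝ) / q)) *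
          morreyNorm N (ENNReal.ofReal q) (ENNReal.ofReal q₁) f) *
        (ENNReal.ofReal (R ^ ((N : ℝ) * (1 - 1 / q₁))) *
          volume (Metric.ball (0 : Euc N) 1) ^ (1 - 1 / q₁)) := by
        rw [hvolpow]; gcongr; exact morrey_ball_bound N hq0 hq₁0 f x hR
    _ = (ENNReal.ofReal (R ^ ((N : ℝ) / q₁ - (N : ℝ) / q)) *
          ENNReal.ofReal (R ^ ((N : ℝ) * (1 - 1 / q₁)))) *
        (volume (Metric.ball (0 : Euc N) 1) ^ (1 - 1 / q₁)) *
        morreyNorm N (ENNReal.ofReal q) (ENNReal.ofReal q₁) f := by ring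
    _ = ENNReal.ofReal (R ^ ((N : ℝ) - (N : ℝ) / q)) *
        (volume (Metric.ball (0 : Euc N) 1) ^ (1 - 1 / q₁)) *
        morreyNorm N (ENNReal.ofReal q) (ENNReal.ofReal q₁) f := by
        rw [← ENNReal.ofReal_mul (by positivity), ← Real.rpow_add hR,
          show (N:ℝ)/q₁ - (N:ℝ)/q + (N:ℝ)*(1-1/q₁) = (N:ℝ) - (N:ℝ)/q from by
            rw [mul_one_sub, mul_one_div]; ring]

noncomputable def annBound : ℕ → ℝ
  | 0 => 1
  | (j+1) => Real.exp (-(4 ^ j) / 4)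

lemma annBound_pos (j : ℕ) : 0 < annBound j := by
  cases j with
  | zero => exact one_pos
  | succ j => exact Real.exp_pos _

lemma annBound_term_le (N : ℕ) {α ρ D : ℝ} (hαN : α ≤ N) (hα0 : 0 ≤ α)
    (hρ : ρ = (2:ℝ) ^ (α - 2 * N)) (hD : D = max 1 ((N.factorial * 4 ^ N * 2 ^ α) / ρ)) :
    ∀ j : ℕ, annBound j * ((2:ℝ) ^ j) ^ α ≤ D * ρ ^ j := by
  have hρ0 : 0 < ρ := hρ ▸ Real.rpow_pos_of_pos two_pos _
  intro j
  cases j with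
  | zero =>
    simp only [annBound, pow_zero, Real.one_rpow, mul_one]
    exact hD ▸ le_max_left _ _
  | succ j =>
    set x : ℝ := (4:ℝ) ^ j / 4 with hxdef
    have hx : 0 < x := by positivity
    have h1 : x ^ N / N.factorial ≤ Real.exp x := by
      calc x ^ N / N.factorial ≤ ∑ i ∈ Finset.range (N+1), x ^ i / i.factorial :=
            Finset.single_le_sum (f := fun i => x ^ i / i.factorial)
              (fun i _ => by positivity) (Finset.self_mem_range_succ N)
        _ ≤ Real.exp x := Real.sum_le_exp_of_nonneg hx.le _
    have h2 : Real.exp (-x) ≤ (N.factorial : ℝ) * 4 ^ N / 4 ^ (j * N) := by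
      have hxN : (0:ℝ) < x ^ N / N.factorial := by positivity
      have hfx : x ^ N = (4:ℝ) ^ (j * N) / 4 ^ N := by
        rw [hxdef, div_pow, ← pow_mul]
      calc Real.exp (-x) = (Real.exp x)⁻¹ := Real.exp_neg x
        _ ≤ (x ^ N / N.factorial)⁻¹ := inv_anti₀ hxN h1
        _ = (N.factorial : ℝ) / x ^ N := by rw [inv_div]
        _ = (N.factorial : ℝ) * 4 ^ N / 4 ^ (j * N) := by
            rw [hfx]
            field_simp
    have hDge : ((N.factorial : ℝ) * 4 ^ N * 2 ^ α) / ρ ≤ D := hD ▸ le_max_right _ _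
    have hann : annBound (j+1) = Real.exp (-x) := by
      simp [annBound, hxdef, neg_div]
    have hpow : ((2:ℝ) ^ (j+1)) ^ α = (4:ℝ) ^ (j * N) * ((2:ℝ) ^ α * ρ ^ j) := by
      have e1 : ((2:ℝ) ^ (j+1)) ^ α = (2:ℝ) ^ (((j:ℝ)+1) * α) := by
        rw [← Real.rpow_natCast (2:ℝ) (j+1), ← Real.rpow_mul (by norm_num : (0:ℝ) ≤ 2)]
        push_cast; ring_nf
      have e2 : ((4:ℝ) ^ (j * N)) = (2:ℝ) ^ ((2 * (j * N) : ℕ) : ℝ) := by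
        rw [show (4:ℝ) = 2 ^ (2:ℕ) by norm_num, ← pow_mul, Real.rpow_natCast]
      have e3 : ρ ^ j = (2:ℝ) ^ ((α - 2*N) * (j:ℝ)) := by
        rw [hρ, ← Real.rpow_natCast ((2:ℝ) ^ (α - 2*N)) j,
          ← Real.rpow_mul (by norm_num : (0:ℝ) ≤ 2)]
      rw [e1, e2, e3, ← Real.rpow_add two_pos, ← Real.rpow_add two_pos]
      congr 1
      push_cast; ring
    calc annBound (j+1) * ((2:ℝ) ^ (j+1)) ^ α
        ≤ ((N.factorial : ℝ) * 4 ^ N / 4 ^ (j * N)) * ((4:ℝ) ^ (j * N) * ((2:ℝ) ^ α * ρ ^ j)) := by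
          rw [hann, hpow]
          apply mul_le_mul_of_nonneg_right h2 (by positivity)
      _ = ((N.factorial : ℝ) * 4 ^ N * 2 ^ α) / ρ * ρ ^ (j+1) := by
          field_simp
          ring
      _ ≤ D * ρ ^ (j+1) := mul_le_mul_of_nonneg_right hDge (by positivity)

/-- **Morrey-to-`L^∞` heat semigroup estimate.** For `1 ≤ q₁ ≤ q < ∞`, there is `C > 0`
depending only on `N, q, q₁` such that `‖e^{tΔ} f‖_{L^∞} ≤ C t^{−N/(2q)} ‖f‖_{M^q_{q₁}}`
for all `t > 0` and `f ∈ M^q_{q₁}(ℝ^N)`. -/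
theorem heat_semigroup_morrey_to_Linfty (N : ℕ) (hN : 1 ≤ N) (q q₁ : ℝ)
    (hq₁ : 1 ≤ q₁) (hq₁q : q₁ ≤ q) :
    ∃ C > (0 : ℝ), ∀ (t : ℝ), 0 < t → ∀ f : Euc N → ℝ, Measurable f →
      morreyNorm N (ENNReal.ofReal q) (ENNReal.ofReal q₁) f ≠ ⊤ →
      eLpNorm (heatSemigroup N t f) ⊤ volume ≤
        ENNReal.ofReal (C * t ^ (-(N : ℝ) / (2 * q))) *
          morreyNorm N (ENNReal.ofReal q) (ENNReal.ofReal q₁) f := by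
  have hq : 1 ≤ q := le_trans hq₁ hq₁q
  have hq0 : 0 < q := by linarith
  have hq₁0 : 0 < q₁ := by linarith
  have hN0 : (0:ℝ) < N := by exact_mod_cast hN
  set α : ℝ := (N : ℝ) - (N : ℝ) / q with hα
  have hα0 : 0 ≤ α := by
    have : (N:ℝ)/q ≤ N := div_le_self (Nat.cast_nonneg N) hq
    rw [hα]; linarith
  have hαN : α ≤ N := by
    have : 0 ≤ (N:ℝ)/q := by positivity
    rw [hα]; linarith
  set ρ : ℝ := (2:ℝ) ^ (α - 2 * N) with hρdef
  have hρ0 : 0 < ρ := Real.rpow_pos_of_pos two_pos _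
  have hρ1 : ρ < 1 := Real.rpow_lt_one_of_one_lt_of_neg one_lt_two (by linarith)
  have h1ρ : 0 < 1 - ρ := by linarith
  set D : ℝ := max 1 ((N.factorial * 4 ^ N * 2 ^ α) / ρ) with hDdef
  have hD1 : (1:ℝ) ≤ D := le_max_left _ _
  have hD0 : 0 < D := lt_of_lt_of_le one_pos hD1
  have hγ : 0 ≤ 1 - 1 / q₁ := by
    have : 1 / q₁ ≤ 1 := by rw [div_le_one hq₁0]; exact hq₁
    linarith
  set κ : ℝ≥0∞ := volume (Metric.ball (0 : Euc N) 1) ^ (1 - 1 / q₁) with hκdef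
  have hκtop : κ ≠ ⊤ := ENNReal.rpow_ne_top_of_nonneg hγ measure_ball_lt_top.ne
  have hκ0 : 0 < κ :=
    ENNReal.rpow_pos (Metric.measure_ball_pos volume 0 one_pos) measure_ball_lt_top.ne
  have hκT : 0 < κ.toReal := ENNReal.toReal_pos hκ0.ne' hκtop
  have h4π : (0:ℝ) < (4 * Real.pi) ^ (-(N:ℝ)/2) :=
    Real.rpow_pos_of_pos (by positivity) _
  refine ⟨D * (1-ρ)⁻¹ * (4 * Real.pi) ^ (-(N:ℝ)/2) * κ.toReal,
    by positivity, ?_⟩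
  intro t ht f hf hMfin
  set M := morreyNorm N (ENNReal.ofReal q) (ENNReal.ofReal q₁) f with hMdef
  set s : ℝ := Real.sqrt t with hsdef
  have hs : 0 < s := Real.sqrt_pos.mpr ht
  have hs2 : s ^ 2 = t := Real.sq_sqrt ht.le
  have hc₀ : (0:ℝ) < (4 * Real.pi * t) ^ (-(N:ℝ)/2) :=
    Real.rpow_pos_of_pos (by positivity) _
  -- the pointwise bound
  have hpt : ∀ z : Euc N, (‖heatSemigroup N t f z‖₊ : ℝ≥0∞) ≤
      ENNReal.ofReal (D * (1-ρ)⁻¹ * (4 * Real.pi) ^ (-(N:ℝ)/2) * κ.toReal *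
        t ^ (-(N : ℝ) / (2 * q))) * M := by
    intro z
    set S : ℕ → Set (Euc N) := fun j => Metric.closedBall z ((2:ℝ)^j * s) with hSdef
    have hSmeas : ∀ j, MeasurableSet (S j) := fun j => Metric.isClosed_closedBall.measurableSet
    have hSmono : Monotone S := by
      intro i j hij
      apply Metric.closedBall_subset_closedBall
      exact mul_le_mul_of_nonneg_right (pow_le_pow_right₀ one_le_two hij) hs.le
    have hSuniv : ⋃ j, S j = Set.univ := by
      ext y
      simp only [Set.mem_iUnion, Metric.mem_closedBall, Set.mem_univ, iff_true, hSdef]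
      obtain ⟨n, hn⟩ := pow_unbounded_of_one_lt (dist y z / s) one_lt_two
      exact ⟨n, le_of_lt ((div_lt_iff₀ hs).mp hn)⟩
    have hAmeas : ∀ j, MeasurableSet (disjointed S j) := MeasurableSet.disjointed hSmeas
    have hAdis : Pairwise (Function.onFun Disjoint (disjointed S)) := disjoint_disjointed S
    have hAuniv : ⋃ j, disjointed S j = Set.univ := iUnion_disjointed.trans hSuniv
    -- kernel bound on annuli
    have hker : ∀ j : ℕ, ∀ y ∈ disjointed S j,
        (‖heatKernel N t (z - y) • f y‖₊ : ℝ≥0∞) ≤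
          ENNReal.ofReal ((4 * Real.pi * t) ^ (-(N:ℝ)/2) * annBound j) * ‖f y‖₊ := by
      intro j y hy
      have hKnonneg : 0 ≤ heatKernel N t (z - y) := by
        unfold heatKernel; positivity
      have hexp_le : Real.exp (-‖z - y‖ ^ 2 / (4 * t)) ≤ annBound j := by
        cases j with
        | zero =>
          have h1 : (0:ℝ) ≤ ‖z - y‖ ^ 2 / (4 * t) := by positivity
          simpa [annBound] using Real.exp_le_one_iff.mpr (by rw [neg_div]; linarith)
        | succ j =>
          have hy2 : y ∈ S (j+1) \ S j := (hSmono.disjointed_succ (not_isMax j)) ▸ hy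
          have hd : (2:ℝ)^j * s < dist y z := by
            by_contra hcon
            exact hy2.2 (by simpa [hSdef, Metric.mem_closedBall] using not_lt.mp hcon)
          have hnorm : (2:ℝ)^j * s ≤ ‖z - y‖ := by
            rw [← dist_eq_norm, dist_comm]
            exact hd.le
          have hsq : (4:ℝ)^j * t ≤ ‖z - y‖ ^ 2 := by
            have h1 : ((2:ℝ)^j * s) ^ 2 = (4:ℝ)^j * t := by
              rw [mul_pow, ← hs2, ← pow_mul, show (4:ℝ) = 2^(2:ℕ) by norm_num, ← pow_mul]
              ring_nf
            calc (4:ℝ)^j * t = ((2:ℝ)^j * s) ^ 2 := h1.symm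
              _ ≤ ‖z - y‖ ^ 2 := pow_le_pow_left₀ (by positivity) hnorm 2
          have harg : -‖z - y‖ ^ 2 / (4 * t) ≤ -((4:ℝ)^j) / 4 := by
            rw [neg_div, neg_div, neg_le_neg_iff]
            have he : ((4:ℝ)^j) / 4 = ((4:ℝ)^j * t) / (4 * t) := by
              field_simp
            rw [he, div_le_div_iff₀ (by positivity) (by positivity)]
            nlinarith [hsq, ht]
          calc Real.exp (-‖z - y‖ ^ 2 / (4 * t)) ≤ Real.exp (-((4:ℝ)^j) / 4) :=
                Real.exp_le_exp.mpr harg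
            _ = annBound (j+1) := by simp [annBound]
      have hKle : heatKernel N t (z - y) ≤ (4 * Real.pi * t) ^ (-(N:ℝ)/2) * annBound j := by
        unfold heatKernel
        exact mul_le_mul_of_nonneg_left hexp_le hc₀.le
      calc (‖heatKernel N t (z - y) • f y‖₊ : ℝ≥0∞)
          = (‖heatKernel N t (z - y)‖₊ : ℝ≥0∞) * ‖f y‖₊ := by
            rw [nnnorm_smul, ENNReal.coe_mul]
        _ ≤ ENNReal.ofReal ((4 * Real.pi * t) ^ (-(N:ℝ)/2) * annBound j) * ‖f y‖₊ := by
            gcongr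
            rw [← enorm_eq_nnnorm, Real.enorm_eq_ofReal hKnonneg]
            exact ENNReal.ofReal_le_ofReal hKle
    -- the per-annulus integral bound and summation
    have hterm := annBound_term_le N hαN hα0 hρdef hDdef
    calc (‖heatSemigroup N t f z‖₊ : ℝ≥0∞)
        ≤ ∫⁻ y, ‖heatKernel N t (z - y) • f y‖₊ ∂volume := by
          simpa [heatSemigroup, enorm_eq_nnnorm] using
            enorm_integral_le_lintegral_enorm (fun y => heatKernel N t (z - y) • f y)
      _ = ∑' j, ∫⁻ y in disjointed S j, ‖heatKernel N t (z - y) • f y‖₊ ∂volume := by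
          rw [← setLIntegral_univ, ← hAuniv, lintegral_iUnion hAmeas hAdis]
      _ ≤ ∑' j, ENNReal.ofReal ((4 * Real.pi * t) ^ (-(N:ℝ)/2) * annBound j) *
            (ENNReal.ofReal (((2:ℝ)^j * s) ^ α) * κ * M) := by
          apply ENNReal.tsum_le_tsum
          intro j
          calc ∫⁻ y in disjointed S j, ‖heatKernel N t (z - y) • f y‖₊ ∂volume
              ≤ ∫⁻ y in disjointed S j,
                  ENNReal.ofReal ((4 * Real.pi * t) ^ (-(N:ℝ)/2) * annBound j) * ‖f y‖₊
                    ∂volume :=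
                setLIntegral_mono (measurable_const.mul hf.nnnorm.coe_nnreal_ennreal) (hker j)
            _ = ENNReal.ofReal ((4 * Real.pi * t) ^ (-(N:ℝ)/2) * annBound j) *
                  ∫⁻ y in disjointed S j, ‖f y‖₊ ∂volume :=
                lintegral_const_mul _ hf.nnnorm.coe_nnreal_ennreal
            _ ≤ ENNReal.ofReal ((4 * Real.pi * t) ^ (-(N:ℝ)/2) * annBound j) *
                  ∫⁻ y in S j, ‖f y‖₊ ∂volume :=
                mul_le_mul_right (lintegral_mono_set (disjointed_subset S j)) _
            _ ≤ ENNReal.ofReal ((4 * Real.pi * t) ^ (-(N:ℝ)/2) * annBound j) *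
                  (ENNReal.ofReal (((2:ℝ)^j * s) ^ α) * κ * M) := by
                apply mul_le_mul_right
                rw [hα, hκdef, hMdef]
                exact l1_ball_bound N hq₁ hq₁q f hf z (by positivity)
      _ ≤ ∑' j, (ENNReal.ofReal ((4 * Real.pi * t) ^ (-(N:ℝ)/2) * (s ^ α * D)) * κ * M) *
            (ENNReal.ofReal ρ) ^ j := by
          apply ENNReal.tsum_le_tsum
          intro j
          have h2s : ((2:ℝ)^j * s) ^ α = ((2:ℝ)^j) ^ α * s ^ α :=
            Real.mul_rpow (by positivity) hs.le
          have hre : (4 * Real.pi * t) ^ (-(N:ℝ)/2) * annBound j * (((2:ℝ)^j * s) ^ α) ≤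
              (4 * Real.pi * t) ^ (-(N:ℝ)/2) * (s ^ α * D) * ρ ^ j := by
            calc (4 * Real.pi * t) ^ (-(N:ℝ)/2) * annBound j * (((2:ℝ)^j * s) ^ α)
                = ((4 * Real.pi * t) ^ (-(N:ℝ)/2) * s ^ α) * (annBound j * ((2:ℝ)^j) ^ α) := by
                  rw [h2s]; ring
              _ ≤ ((4 * Real.pi * t) ^ (-(N:ℝ)/2) * s ^ α) * (D * ρ ^ j) :=
                  mul_le_mul_of_nonneg_left (hterm j) (by positivity)
              _ = (4 * Real.pi * t) ^ (-(N:ℝ)/2) * (s ^ α * D) * ρ ^ j := by ring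
          calc ENNReal.ofReal ((4 * Real.pi * t) ^ (-(N:ℝ)/2) * annBound j) *
                (ENNReal.ofReal (((2:ℝ)^j * s) ^ α) * κ * M)
              = ENNReal.ofReal ((4 * Real.pi * t) ^ (-(N:ℝ)/2) * annBound j *
                  (((2:ℝ)^j * s) ^ α)) * κ * M := by
                rw [ENNReal.ofReal_mul
                  (mul_nonneg hc₀.le (annBound_pos j).le)]; ring
            _ ≤ ENNReal.ofReal ((4 * Real.pi * t) ^ (-(N:ℝ)/2) * (s ^ α * D) * ρ ^ j) *
                  κ * M := by
                exact mul_le_mul_left (mul_le_mul_left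
                  (ENNReal.ofReal_le_ofReal hre) κ) M
            _ = (ENNReal.ofReal ((4 * Real.pi * t) ^ (-(N:ℝ)/2) * (s ^ α * D)) * κ * M) *
                  (ENNReal.ofReal ρ) ^ j := by
                rw [ENNReal.ofReal_mul
                  (by positivity : (0:ℝ) ≤ (4 * Real.pi * t) ^ (-(N:ℝ)/2) * (s ^ α * D)),
                  ENNReal.ofReal_pow hρ0.le]
                ring
      _ = (ENNReal.ofReal ((4 * Real.pi * t) ^ (-(N:ℝ)/2) * (s ^ α * D)) * κ * M) *
            (1 - ENNReal.ofReal ρ)⁻¹ := by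
          rw [ENNReal.tsum_mul_left, ENNReal.tsum_geometric]
      _ = ENNReal.ofReal (D * (1-ρ)⁻¹ * (4 * Real.pi) ^ (-(N:ℝ)/2) * κ.toReal *
            t ^ (-(N : ℝ) / (2 * q))) * M := by
          have hgeo : (1 - ENNReal.ofReal ρ)⁻¹ = ENNReal.ofReal ((1-ρ)⁻¹) := by
            rw [← ENNReal.ofReal_one, ← ENNReal.ofReal_sub 1 hρ0.le,
              ← ENNReal.ofReal_inv_of_pos h1ρ]
          have hκeq : κ = ENNReal.ofReal κ.toReal := (ENNReal.ofReal_toReal hκtop).symm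
          have hc₀s : (4 * Real.pi * t) ^ (-(N:ℝ)/2) * s ^ α =
              (4 * Real.pi) ^ (-(N:ℝ)/2) * t ^ (-(N : ℝ) / (2 * q)) := by
            rw [Real.mul_rpow (by positivity) ht.le, hsdef, Real.sqrt_eq_rpow,
              ← Real.rpow_mul ht.le, mul_assoc, ← Real.rpow_add ht]
            congr 1
            rw [hα]
            field_simp
            ring
          have hDn : (0:ℝ) ≤ (4 * Real.pi) ^ (-(N:ℝ)/2) * t ^ (-(N : ℝ) / (2 * q)) * D := by
            positivity
          have hre2 : D * (1-ρ)⁻¹ * (4 * Real.pi) ^ (-(N:ℝ)/2) * κ.toReal *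
              t ^ (-(N : ℝ) / (2 * q)) =
              (4 * Real.pi) ^ (-(N:ℝ)/2) * t ^ (-(N : ℝ) / (2 * q)) * D * κ.toReal *
                (1-ρ)⁻¹ := by ring
          rw [hgeo, show (4 * Real.pi * t) ^ (-(N:ℝ)/2) * (s ^ α * D) =
              (4 * Real.pi * t) ^ (-(N:ℝ)/2) * s ^ α * D from by ring, hc₀s, hre2,
            ENNReal.ofReal_mul (mul_nonneg hDn hκT.le), ENNReal.ofReal_mul hDn]
          conv_lhs => rw [hκeq]
          ring
  rw [eLpNorm_exponent_top, eLpNormEssSup]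
  exact essSup_le_of_ae_le _ (Filter.Eventually.of_forall hpt)
end
end

section
/- (Morrey-to-L^∞ gradient heat semigroup estimate) Let N ≥ 1 and 1 ≤ q₁ ≤ q < ∞. Then there exists a constant C > 0, depending only on N, q and q₁, such that for every first-order spatial derivative ∂_x, ‖∂_x e^{tΔ} f‖_{L^∞} ≤ C t^{−N/(2q) − 1/2} ‖f‖_{M^q_{q₁}} for all t > 0 and all f ∈ M^q_{q₁}(ℝ^N). -/
open MeasureTheory ENNReal

noncomputable section

/-- First-order partial derivative `∂_i` (directional derivative along the `i`-th
coordinate vector). -/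
noncomputable def pderiv' (N : ℕ) (i : Fin N) {F : Type*} [NormedAddCommGroup F]
    [NormedSpace ℝ F] (g : Euc N → F) : Euc N → F :=
  fun x => fderiv ℝ g x (EuclideanSpace.single i 1)

/-- volume of unit ball -/
noncomputable def vN (N : ℕ) : ℝ≥0∞ := volume (Metric.ball (0 : Euc N) 1)

noncomputable def Dv (N : ℕ) (q₁ : ℝ) : ℝ≥0∞ := vN N ^ (1 - 1/q₁)

lemma Dv_ne_top (N : ℕ) (q₁ : ℝ) (hq₁ : 1 ≤ q₁) : Dv N q₁ ≠ ⊤ := by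
  have h1 : vN N ≠ ⊤ := measure_ball_lt_top.ne
  have e0 : (0:ℝ) ≤ 1 - 1/q₁ := by
    have h2 : 0 < q₁ := by linarith
    have : 1/q₁ ≤ 1 := by rw [div_le_one h2]; exact hq₁
    linarith
  exact ENNReal.rpow_ne_top_of_nonneg e0 h1

lemma ball_bound (N : ℕ) (q q₁ : ℝ) (hq₁ : 1 ≤ q₁) (hq₁q : q₁ ≤ q)
    (f : Euc N → ℝ) (hf : Measurable f) (x : Euc N) (R : ℝ) (hR : 0 < R) :
    ∫⁻ y in Metric.closedBall x R, (‖f y‖₊ : ℝ≥0∞) ≤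
      ENNReal.ofReal (R ^ ((N : ℝ) - (N : ℝ)/q)) * (Dv N q₁ *
        morreyNorm N (ENNReal.ofReal q) (ENNReal.ofReal q₁) f) := by
  have hq : 1 ≤ q := le_trans hq₁ hq₁q
  have hq0 : 0 < q := by linarith
  have hq₁0 : 0 < q₁ := by linarith
  set M := morreyNorm N (ENNReal.ofReal q) (ENNReal.ofReal q₁) f with hMdef
  set B := Metric.closedBall x R
  -- extract morrey norm bound
  have hM : ENNReal.ofReal (R ^ ((N:ℝ)/q - (N:ℝ)/q₁)) *
      eLpNorm f (ENNReal.ofReal q₁) (volume.restrict B) ≤ M := by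
    rw [hMdef, morreyNorm]
    refine le_iSup_of_le x (le_iSup_of_le R (le_iSup_of_le hR ?_))
    rw [ENNReal.toReal_ofReal hq0.le, ENNReal.toReal_ofReal hq₁0.le]
  have hE : eLpNorm f (ENNReal.ofReal q₁) (volume.restrict B) ≤
      ENNReal.ofReal (R ^ ((N:ℝ)/q₁ - (N:ℝ)/q)) * M := by
    calc eLpNorm f (ENNReal.ofReal q₁) (volume.restrict B)
        = ENNReal.ofReal (R ^ ((N:ℝ)/q₁ - (N:ℝ)/q)) *
          (ENNReal.ofReal (R ^ ((N:ℝ)/q - (N:ℝ)/q₁)) *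
            eLpNorm f (ENNReal.ofReal q₁) (volume.restrict B)) := by
          rw [← mul_assoc, ← ENNReal.ofReal_mul (by positivity), ← Real.rpow_add hR]
          norm_num
      _ ≤ _ := mul_le_mul_right hM _
  -- Hölder
  have holder := eLpNorm_le_eLpNorm_mul_rpow_measure_univ
    (p := (1 : ℝ≥0∞)) (q := ENNReal.ofReal q₁)
    (ENNReal.one_le_ofReal.mpr hq₁) (μ := volume.restrict B) hf.aestronglyMeasurable
  rw [eLpNorm_one_eq_lintegral_enorm] at holder
  have hvol : (volume.restrict B) Set.univ = ENNReal.ofReal (R ^ N) * vN N := by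
    rw [Measure.restrict_apply_univ]
    simpa [vN] using MeasureTheory.Measure.addHaar_closedBall (μ := (volume : Measure (Euc N))) x hR.le
  rw [hvol] at holder
  have hexp : (1:ℝ≥0∞).toReal = 1 := by simp
  have hq₁toReal : (ENNReal.ofReal q₁).toReal = q₁ := ENNReal.toReal_ofReal hq₁0.le
  rw [hexp, hq₁toReal] at holder
  have e0 : (0:ℝ) ≤ 1 - 1/q₁ := by
    have : 1/q₁ ≤ 1 := by rw [div_le_one hq₁0]; exact hq₁
    linarith
  calc ∫⁻ y in B, (‖f y‖₊ : ℝ≥0∞)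
      ≤ eLpNorm f (ENNReal.ofReal q₁) (volume.restrict B) *
        (ENNReal.ofReal (R ^ N) * vN N) ^ (1/1 - 1/q₁) := holder
    _ ≤ (ENNReal.ofReal (R ^ ((N:ℝ)/q₁ - (N:ℝ)/q)) * M) *
        (ENNReal.ofReal (R ^ N) * vN N) ^ (1/1 - 1/q₁) := by
          exact mul_le_mul_left hE _
    _ = ENNReal.ofReal (R ^ ((N : ℝ) - (N : ℝ)/q)) * (Dv N q₁ * M) := by
          rw [show (1/1 - 1/q₁ : ℝ) = 1 - 1/q₁ by norm_num]
          rw [ENNReal.mul_rpow_of_nonneg _ _ e0]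
          rw [ENNReal.ofReal_rpow_of_pos (by positivity)]
          rw [← Real.rpow_natCast R N, ← Real.rpow_mul hR.le]
          rw [← mul_assoc, mul_comm (ENNReal.ofReal _ * M), ← mul_assoc]
          rw [← ENNReal.ofReal_mul (by positivity), ← Real.rpow_add hR]
          rw [show (N:ℝ) * (1 - 1/q₁) + ((N:ℝ)/q₁ - (N:ℝ)/q) = (N:ℝ) - (N:ℝ)/q by
            field_simp; ring]
          rw [Dv]; ring

lemma exp_le_tsum (u : ℝ) (hu : 0 ≤ u) :
    ENNReal.ofReal (Real.exp (-u^2/16)) ≤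
      ∑' k : ℕ, ENNReal.ofReal (Real.exp (1/16 - (4:ℝ)^k/16)) *
        (if u ≤ 2^(k+2) then (1:ℝ≥0∞) else 0) := by
  rcases lt_or_ge u 2 with h2 | h2
  · refine le_trans ?_ (ENNReal.le_tsum 0)
    have : u ≤ (2:ℝ)^(0+2) := by norm_num; linarith
    rw [if_pos this, mul_one]
    apply ENNReal.ofReal_le_ofReal
    apply Real.exp_le_exp.mpr
    norm_num
    nlinarith
  · set n := ⌊u⌋₊ with hn
    have hn2 : 2 ≤ n := Nat.le_floor (by exact_mod_cast h2)
    have hn0 : n ≠ 0 := by omega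
    set k := Nat.log 2 n with hk
    refine le_trans ?_ (ENNReal.le_tsum k)
    have h2k : (2:ℕ)^k ≤ n := Nat.pow_log_le_self 2 hn0
    have hlt : n < 2^(k+1) := Nat.lt_pow_succ_log_self (by norm_num) n
    have hnu : (n:ℝ) ≤ u := Nat.floor_le hu
    have huu : u < n + 1 := Nat.lt_floor_add_one u
    have hcond : u ≤ (2:ℝ)^(k+2) := by
      have : (n:ℝ) + 1 ≤ ((2:ℕ)^(k+1) : ℝ) := by exact_mod_cast hlt
      have h22 : ((2:ℕ)^(k+1) : ℝ) ≤ (2:ℝ)^(k+2) := by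
        push_cast
        have : (2:ℝ)^(k+1) ≤ 2^(k+2) := by
          apply pow_le_pow_right₀ (by norm_num) (by omega)
        linarith
      linarith
    rw [if_pos hcond, mul_one]
    apply ENNReal.ofReal_le_ofReal
    apply Real.exp_le_exp.mpr
    have h4 : (4:ℝ)^k ≤ u^2 := by
      have h2kr : (2:ℝ)^k ≤ u := by
        calc (2:ℝ)^k = ((2:ℕ)^k : ℝ) := by push_cast; ring
          _ ≤ (n:ℝ) := by exact_mod_cast h2k
          _ ≤ u := hnu
      calc (4:ℝ)^k = ((2:ℝ)^k)^2 := by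
            rw [← pow_mul, pow_mul']; norm_num
        _ ≤ u^2 := by
            apply pow_le_pow_left₀ (by positivity) h2kr
    nlinarith

/-- the summand for the annuli series -/
noncomputable def wSeq (a : ℝ) (k : ℕ) : ℝ :=
  Real.exp (1/16 - (4:ℝ)^k/16) * ((2:ℝ)^(k+2)) ^ a

lemma wSeq_nonneg (a : ℝ) (k : ℕ) : 0 ≤ wSeq a k := by
  unfold wSeq; positivity

lemma wSeq_summable (a : ℝ) : Summable (wSeq a) := by
  apply summable_of_ratio_norm_eventually_le (r := 1/2) (by norm_num)
  have key : ∀ k : ℕ, wSeq a (k+1) = wSeq a k * (Real.exp (-(3*(4:ℝ)^k)/16) * (2:ℝ)^a) := by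
    intro k
    unfold wSeq
    rw [show (1/16 - (4:ℝ)^(k+1)/16) = (1/16 - (4:ℝ)^k/16) + (-(3*(4:ℝ)^k)/16) by ring,
      Real.exp_add, show ((2:ℝ)^(k+1+2)) = (2:ℝ)^(k+2) * 2 by ring,
      Real.mul_rpow (by positivity) (by norm_num)]
    ring
  have htend : Filter.Tendsto (fun k : ℕ => Real.exp (-(3*(4:ℝ)^k)/16) * (2:ℝ)^a)
      Filter.atTop (nhds 0) := by
    rw [show (0:ℝ) = 0 * (2:ℝ)^a by ring]
    apply Filter.Tendsto.mul_const
    apply Real.tendsto_exp_atBot.comp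
    have h4 : Filter.Tendsto (fun k : ℕ => (4:ℝ)^k) Filter.atTop Filter.atTop :=
      tendsto_pow_atTop_atTop_of_one_lt (by norm_num)
    have h5 := h4.atTop_mul_const (r := 3/16) (by norm_num)
    have h6 := Filter.tendsto_neg_atTop_atBot.comp h5
    convert h6 using 2 with k
    simp only [Function.comp_apply]
    ring
  have hev : ∀ᶠ k : ℕ in Filter.atTop,
      Real.exp (-(3*(4:ℝ)^k)/16) * (2:ℝ)^a ≤ 1/2 := by
    have := htend.eventually (eventually_le_nhds (show (0:ℝ) < 1/2 by norm_num))
    exact this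
  filter_upwards [hev] with k hk
  rw [key k, norm_mul]
  rw [Real.norm_eq_abs, Real.norm_eq_abs, abs_of_nonneg (wSeq_nonneg a k),
    abs_of_nonneg (by positivity)]
  calc wSeq a k * (Real.exp (-(3*(4:ℝ)^k)/16) * (2:ℝ)^a)
      ≤ wSeq a k * (1/2) := by
        apply mul_le_mul_of_nonneg_left hk (wSeq_nonneg a k)
    _ = 1/2 * wSeq a k := by ring

noncomputable def SC (a : ℝ) : ℝ := ∑' k, wSeq a k

lemma SC_nonneg (a : ℝ) : 0 ≤ SC a := tsum_nonneg (wSeq_nonneg a)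

lemma gauss_bound (N : ℕ) (q q₁ : ℝ) (hq₁ : 1 ≤ q₁) (hq₁q : q₁ ≤ q)
    (f : Euc N → ℝ) (hf : Measurable f) (t : ℝ) (ht : 0 < t) (x : Euc N) :
    ∫⁻ y, ENNReal.ofReal (Real.exp (-‖x - y‖^2/(16*t))) * (‖f y‖₊ : ℝ≥0∞) ≤
      ENNReal.ofReal (SC ((N:ℝ) - (N:ℝ)/q) * t ^ (((N:ℝ) - (N:ℝ)/q)/2)) *
        (Dv N q₁ * morreyNorm N (ENNReal.ofReal q) (ENNReal.ofReal q₁) f) := by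
  set a := (N:ℝ) - (N:ℝ)/q with ha
  set M := morreyNorm N (ENNReal.ofReal q) (ENNReal.ofReal q₁) f with hM
  have hst : 0 < Real.sqrt t := Real.sqrt_pos.mpr ht
  -- pointwise bound
  have hpt : ∀ y : Euc N, ENNReal.ofReal (Real.exp (-‖x - y‖^2/(16*t))) * (‖f y‖₊ : ℝ≥0∞) ≤
      ∑' k : ℕ, (Metric.closedBall x ((2:ℝ)^(k+2) * Real.sqrt t)).indicator
        (fun y => ENNReal.ofReal (Real.exp (1/16 - (4:ℝ)^k/16)) * (‖f y‖₊ : ℝ≥0∞)) y := by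
    intro y
    set u := ‖x - y‖ / Real.sqrt t with hu
    have hu0 : 0 ≤ u := by positivity
    have harg : -‖x - y‖^2/(16*t) = -u^2/16 := by
      rw [hu, div_pow, Real.sq_sqrt ht.le]
      field_simp
    have hcond : ∀ k : ℕ, (u ≤ (2:ℝ)^(k+2)) ↔ y ∈ Metric.closedBall x ((2:ℝ)^(k+2) * Real.sqrt t) := by
      intro k
      rw [Metric.mem_closedBall, dist_comm, dist_eq_norm, hu, div_le_iff₀ hst]
    calc ENNReal.ofReal (Real.exp (-‖x - y‖^2/(16*t))) * (‖f y‖₊ : ℝ≥0∞)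
        = ENNReal.ofReal (Real.exp (-u^2/16)) * (‖f y‖₊ : ℝ≥0∞) := by rw [harg]
      _ ≤ (∑' k : ℕ, ENNReal.ofReal (Real.exp (1/16 - (4:ℝ)^k/16)) *
            (if u ≤ 2^(k+2) then (1:ℝ≥0∞) else 0)) * (‖f y‖₊ : ℝ≥0∞) :=
          mul_le_mul_left (exp_le_tsum u hu0) _
      _ = ∑' k : ℕ, (ENNReal.ofReal (Real.exp (1/16 - (4:ℝ)^k/16)) *
            (if u ≤ 2^(k+2) then (1:ℝ≥0∞) else 0)) * (‖f y‖₊ : ℝ≥0∞) := ENNReal.tsum_mul_right.symm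
      _ = _ := by
          congr 1
          ext k
          by_cases hc : u ≤ (2:ℝ)^(k+2)
          · rw [if_pos hc, Set.indicator_of_mem ((hcond k).mp hc), mul_one]
          · rw [if_neg hc, Set.indicator_of_notMem (fun hmem => hc ((hcond k).mpr hmem)),
              mul_zero, zero_mul]
  calc ∫⁻ y, ENNReal.ofReal (Real.exp (-‖x - y‖^2/(16*t))) * (‖f y‖₊ : ℝ≥0∞)
      ≤ ∫⁻ y, ∑' k : ℕ, (Metric.closedBall x ((2:ℝ)^(k+2) * Real.sqrt t)).indicator
          (fun y => ENNReal.ofReal (Real.exp (1/16 - (4:ℝ)^k/16)) * (‖f y‖₊ : ℝ≥0∞)) y :=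
        lintegral_mono hpt
    _ = ∑' k : ℕ, ∫⁻ y, (Metric.closedBall x ((2:ℝ)^(k+2) * Real.sqrt t)).indicator
          (fun y => ENNReal.ofReal (Real.exp (1/16 - (4:ℝ)^k/16)) * (‖f y‖₊ : ℝ≥0∞)) y := by
        apply lintegral_tsum
        intro k
        exact ((measurable_const.mul hf.nnnorm.coe_nnreal_ennreal).indicator
          Metric.isClosed_closedBall.measurableSet).aemeasurable
    _ ≤ ∑' k : ℕ, ENNReal.ofReal (wSeq a k * t ^ (a/2)) * (Dv N q₁ * M) := by
        apply ENNReal.tsum_le_tsum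
        intro k
        rw [lintegral_indicator Metric.isClosed_closedBall.measurableSet,
          lintegral_const_mul' _ _ ENNReal.ofReal_ne_top]
        have hr : (0:ℝ) < (2:ℝ)^(k+2) * Real.sqrt t := by positivity
        calc ENNReal.ofReal (Real.exp (1/16 - (4:ℝ)^k/16)) *
              ∫⁻ y in Metric.closedBall x ((2:ℝ)^(k+2) * Real.sqrt t), (‖f y‖₊ : ℝ≥0∞)
            ≤ ENNReal.ofReal (Real.exp (1/16 - (4:ℝ)^k/16)) *
              (ENNReal.ofReal (((2:ℝ)^(k+2) * Real.sqrt t) ^ a) * (Dv N q₁ * M)) :=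
              mul_le_mul_right (ball_bound N q q₁ hq₁ hq₁q f hf x _ hr) _
          _ = ENNReal.ofReal (wSeq a k * t ^ (a/2)) * (Dv N q₁ * M) := by
              rw [← mul_assoc, ← ENNReal.ofReal_mul (by positivity)]
              congr 2
              rw [Real.mul_rpow (by positivity) hst.le, wSeq, Real.sqrt_eq_rpow,
                ← Real.rpow_mul ht.le, show (1/2*a : ℝ) = a/2 by ring]
              ring
    _ = ENNReal.ofReal (SC a * t ^ (a/2)) * (Dv N q₁ * M) := by
        rw [ENNReal.tsum_mul_right]
        congr 1
        rw [← ENNReal.ofReal_tsum_of_nonneg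
          (fun k => mul_nonneg (wSeq_nonneg a k) (Real.rpow_nonneg ht.le _))
          ((wSeq_summable a).mul_right _)]
        congr 1
        rw [SC, ← tsum_mul_right]

lemma heatKernel_nonneg (N : ℕ) (t : ℝ) (ht : 0 < t) (x : Euc N) : 0 ≤ heatKernel N t x := by
  unfold heatKernel
  have hπ : 0 < Real.pi := Real.pi_pos
  positivity

lemma heatKernel_line_hasDerivAt (N : ℕ) (t : ℝ) (z v : Euc N) (s : ℝ) :
    HasDerivAt (fun s : ℝ => heatKernel N t (z + s • v))
      ((4 * Real.pi * t) ^ (-(N : ℝ) / 2) *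
        (Real.exp (-‖z + s • v‖ ^ 2 / (4 * t)) *
          (-(2 * (inner ℝ (z + s • v) v)) / (4 * t)))) s := by
  have hline : HasDerivAt (fun s : ℝ => z + s • v) v s := by
    simpa using ((hasDerivAt_id s).smul_const v).const_add z
  have hnsq : HasDerivAt (fun s : ℝ => ‖z + s • v‖ ^ 2)
      (2 * (inner ℝ (z + s • v) v)) s := hline.norm_sq
  have harg : HasDerivAt (fun s : ℝ => -‖z + s • v‖ ^ 2 / (4 * t))
      (-(2 * (inner ℝ (z + s • v) v)) / (4 * t)) s := by
    simpa [neg_div] using (hnsq.neg).div_const (4 * t)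
  simpa [heatKernel] using (harg.exp).const_mul ((4 * Real.pi * t) ^ (-(N : ℝ) / 2))

lemma aux1 (t X : ℝ) (ht : 0 < t) (hX : 0 ≤ X) :
    X * Real.exp (-X^2/(8*t)) ≤ 2 * Real.sqrt 2 * Real.sqrt t := by
  set b := 2 * Real.sqrt 2 * Real.sqrt t with hb
  have hb0 : 0 < b := by rw [hb]; positivity
  have hbsq : b^2 = 8*t := by
    rw [hb, mul_pow, mul_pow, Real.sq_sqrt (by norm_num : (0:ℝ) ≤ 2), Real.sq_sqrt ht.le]; ring
  have hexp1 : Real.exp (-X^2/(8*t)) ≤ 1 := by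
    rw [← Real.exp_zero]
    apply Real.exp_le_exp.mpr
    apply div_nonpos_of_nonpos_of_nonneg
    · nlinarith [sq_nonneg X]
    · positivity
  rcases le_or_gt X b with h | h
  · calc X * Real.exp (-X^2/(8*t)) ≤ X * 1 :=
        mul_le_mul_of_nonneg_left hexp1 hX
      _ ≤ b := by linarith
  · have hX0 : 0 < X := lt_trans hb0 h
    have hy : 0 < X^2/(8*t) := by positivity
    have hexp2 : Real.exp (-X^2/(8*t)) ≤ 8*t/X^2 := by
      rw [show -X^2/(8*t) = -(X^2/(8*t)) by ring, Real.exp_neg]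
      rw [show 8*t/X^2 = (X^2/(8*t))⁻¹ by field_simp]
      apply inv_anti₀ hy
      calc X^2/(8*t) ≤ X^2/(8*t) + 1 := by linarith
        _ ≤ Real.exp (X^2/(8*t)) := Real.add_one_le_exp _
    calc X * Real.exp (-X^2/(8*t)) ≤ X * (8*t/X^2) := mul_le_mul_of_nonneg_left hexp2 hX
      _ = 8*t/X := by field_simp
      _ ≤ 8*t/b := by apply div_le_div_of_nonneg_left (by linarith) hb0 h.le
      _ = b := by rw [eq_comm, eq_div_iff hb0.ne']; nlinarith

lemma aux2 (t zn X s : ℝ) (ht : 0 < t) (hzn : 0 ≤ zn) (hX : 0 ≤ X)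
    (hzX : zn ≤ X + |s|) (hs : |s| ≤ Real.sqrt t) :
    Real.exp (-X^2/(8*t)) ≤ Real.exp (1/8) * Real.exp (-zn^2/(16*t)) := by
  rw [← Real.exp_add]
  apply Real.exp_le_exp.mpr
  have hst : Real.sqrt t ^ 2 = t := Real.sq_sqrt ht.le
  have hst0 : 0 ≤ Real.sqrt t := Real.sqrt_nonneg t
  have hzX' : zn ≤ X + Real.sqrt t := by linarith
  have key : zn^2/2 - t ≤ X^2 := by
    nlinarith [sq_nonneg (X - Real.sqrt t), sq_nonneg (X + Real.sqrt t - zn)]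
  have expand : 1/8 + -zn^2/(16*t) - (-X^2/(8*t)) = (2*t - zn^2 + 2*X^2)/(16*t) := by
    field_simp; ring
  have hnum : (0:ℝ) ≤ (2*t - zn^2 + 2*X^2)/(16*t) := by
    apply div_nonneg (by nlinarith) (by positivity)
  linarith

/-- constant for the kernel gradient bound -/
noncomputable def Kc (N : ℕ) : ℝ :=
  (4 * Real.pi) ^ (-(N : ℝ) / 2) * Real.sqrt 2 * Real.exp (1/8)

lemma Kc_pos (N : ℕ) : 0 < Kc N := by
  unfold Kc
  have hπ : 0 < Real.pi := Real.pi_pos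
  positivity

lemma kernel_deriv_norm_bound (N : ℕ) (t : ℝ) (ht : 0 < t) (z v : Euc N) (hv : ‖v‖ = 1)
    (s : ℝ) (hs : |s| ≤ Real.sqrt t) :
    |(4 * Real.pi * t) ^ (-(N : ℝ) / 2) *
        (Real.exp (-‖z + s • v‖ ^ 2 / (4 * t)) *
          (-(2 * (inner ℝ (z + s • v) v)) / (4 * t)))| ≤
      Kc N * t ^ (-(N:ℝ)/2 - 1/2) * Real.exp (-‖z‖^2/(16*t)) := by
  have hπ : 0 < Real.pi := Real.pi_pos
  set w := z + s • v with hw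
  set X := ‖w‖ with hX
  have hX0 : 0 ≤ X := norm_nonneg w
  have hc0 : (0:ℝ) < (4 * Real.pi * t) ^ (-(N : ℝ) / 2) := by positivity
  -- Cauchy-Schwarz
  have hCS : |(inner ℝ w v)| ≤ X := by
    calc |(inner ℝ w v)| ≤ ‖w‖ * ‖v‖ := abs_real_inner_le_norm w v
      _ = X := by rw [hv, mul_one]
  have habs : |(4 * Real.pi * t) ^ (-(N : ℝ) / 2) *
      (Real.exp (-X ^ 2 / (4 * t)) * (-(2 * (inner ℝ w v)) / (4 * t)))| ≤
      (4 * Real.pi * t) ^ (-(N : ℝ) / 2) * (Real.exp (-X ^ 2 / (4 * t)) * (X / (2 * t))) := by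
    rw [abs_mul, abs_mul, abs_of_pos hc0, abs_of_pos (Real.exp_pos _)]
    apply mul_le_mul_of_nonneg_left _ hc0.le
    apply mul_le_mul_of_nonneg_left _ (Real.exp_pos _).le
    rw [abs_div, abs_of_pos (by linarith : (0:ℝ) < 4 * t), abs_neg, abs_mul, abs_two]
    rw [div_le_div_iff₀ (by linarith) (by linarith)]
    calc 2 * |(inner ℝ w v)| * (2 * t) ≤ 2 * X * (2 * t) := by
          apply mul_le_mul_of_nonneg_right _ (by linarith)
          linarith
      _ = X * (4 * t) := by ring
  apply le_trans habs
  -- step 1 : X/(2t) exp(-X²/4t) ≤ √2/√t exp(-X²/8t)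
  have hsplit : Real.exp (-X ^ 2 / (4 * t)) =
      Real.exp (-X ^ 2 / (8 * t)) * Real.exp (-X ^ 2 / (8 * t)) := by
    rw [← Real.exp_add]; congr 1; field_simp; ring
  have hstep1 : Real.exp (-X ^ 2 / (4 * t)) * (X / (2 * t)) ≤
      Real.sqrt 2 / Real.sqrt t * Real.exp (-X ^ 2 / (8 * t)) := by
    rw [hsplit]
    have h1 : X * Real.exp (-X^2/(8*t)) ≤ 2 * Real.sqrt 2 * Real.sqrt t := aux1 t X ht hX0
    have hsq : Real.sqrt t * Real.sqrt t = t := Real.mul_self_sqrt ht.le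
    have hst0 : 0 < Real.sqrt t := Real.sqrt_pos.mpr ht
    calc Real.exp (-X^2/(8*t)) * Real.exp (-X^2/(8*t)) * (X / (2*t))
        = (X * Real.exp (-X^2/(8*t))) * Real.exp (-X^2/(8*t)) / (2*t) := by ring
      _ ≤ (2 * Real.sqrt 2 * Real.sqrt t) * Real.exp (-X^2/(8*t)) / (2*t) := by
          apply div_le_div_of_nonneg_right _ (by linarith)
          exact mul_le_mul_of_nonneg_right h1 (Real.exp_pos _).le
      _ = Real.sqrt 2 / Real.sqrt t * Real.exp (-X^2/(8*t)) := by
          field_simp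
          linear_combination hsq
  -- step 2
  have hzX : ‖z‖ ≤ X + |s| := by
    calc ‖z‖ = ‖w - s • v‖ := by rw [hw]; congr 1; abel
      _ ≤ ‖w‖ + ‖s • v‖ := norm_sub_le w (s • v)
      _ = X + |s| := by rw [norm_smul, hv, mul_one, Real.norm_eq_abs]
  have hstep2 : Real.exp (-X^2/(8*t)) ≤ Real.exp (1/8) * Real.exp (-‖z‖^2/(16*t)) :=
    aux2 t ‖z‖ X s ht (norm_nonneg z) hX0 hzX hs
  -- combine
  calc (4 * Real.pi * t) ^ (-(N : ℝ) / 2) * (Real.exp (-X ^ 2 / (4 * t)) * (X / (2 * t)))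
      ≤ (4 * Real.pi * t) ^ (-(N : ℝ) / 2) *
        (Real.sqrt 2 / Real.sqrt t * (Real.exp (1/8) * Real.exp (-‖z‖^2/(16*t)))) := by
        apply mul_le_mul_of_nonneg_left _ hc0.le
        calc Real.exp (-X ^ 2 / (4 * t)) * (X / (2 * t))
            ≤ Real.sqrt 2 / Real.sqrt t * Real.exp (-X ^ 2 / (8 * t)) := hstep1
          _ ≤ Real.sqrt 2 / Real.sqrt t * (Real.exp (1/8) * Real.exp (-‖z‖^2/(16*t))) := by
              apply mul_le_mul_of_nonneg_left hstep2 (by positivity)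
    _ = Kc N * t ^ (-(N:ℝ)/2 - 1/2) * Real.exp (-‖z‖^2/(16*t)) := by
        rw [Kc, show (4 * Real.pi * t) = (4 * Real.pi) * t by ring,
          Real.mul_rpow (by positivity) ht.le,
          show (-(N:ℝ)/2 - 1/2) = (-(N:ℝ)/2) + (-(1/2) : ℝ) by ring,
          Real.rpow_add ht, Real.rpow_neg ht.le,
          show ((1:ℝ)/2) = (2:ℝ)⁻¹ by norm_num]
        have hhalf : (t : ℝ) ^ ((2:ℝ)⁻¹) = Real.sqrt t := by
          rw [Real.sqrt_eq_rpow]; norm_num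
        rw [hhalf]
        have hst0 : 0 < Real.sqrt t := Real.sqrt_pos.mpr ht
        field_simp

lemma heatKernel_diff_bound (N : ℕ) (t : ℝ) (ht : 0 < t) (z v : Euc N) (hv : ‖v‖ = 1)
    (h : ℝ) (hh0 : 0 ≤ h) (hh : h ≤ Real.sqrt t) :
    |heatKernel N t (z + h • v) - heatKernel N t z| ≤
      h * (Kc N * t ^ (-(N:ℝ)/2 - 1/2) * Real.exp (-‖z‖^2/(16*t))) := by
  set C := Kc N * t ^ (-(N:ℝ)/2 - 1/2) * Real.exp (-‖z‖^2/(16*t)) with hC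
  have key := norm_image_sub_le_of_norm_deriv_le_segment'
    (f := fun s : ℝ => heatKernel N t (z + s • v))
    (f' := fun s : ℝ => (4 * Real.pi * t) ^ (-(N : ℝ) / 2) *
        (Real.exp (-‖z + s • v‖ ^ 2 / (4 * t)) *
          (-(2 * (inner ℝ (z + s • v) v)) / (4 * t))))
    (a := 0) (b := h) (C := C)
    (fun s _ => (heatKernel_line_hasDerivAt N t z v s).hasDerivWithinAt)
    (fun s hs => by
      rw [Real.norm_eq_abs]
      apply kernel_deriv_norm_bound N t ht z v hv
      rw [abs_of_nonneg hs.1]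
      exact le_trans hs.2.le hh)
    h (Set.right_mem_Icc.mpr hh0)
  rw [Real.norm_eq_abs] at key
  simpa [mul_comm] using key

lemma heatKernel_shift_meas (N : ℕ) (t : ℝ) (w : Euc N) :
    Measurable (fun y : Euc N => heatKernel N t (w - y)) := by
  unfold heatKernel
  fun_prop

lemma gauss_lint_ne_top (N : ℕ) (q q₁ : ℝ) (hq₁ : 1 ≤ q₁) (hq₁q : q₁ ≤ q)
    (f : Euc N → ℝ) (hf : Measurable f)
    (hM : morreyNorm N (ENNReal.ofReal q) (ENNReal.ofReal q₁) f ≠ ⊤)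
    (t : ℝ) (ht : 0 < t) (x : Euc N) :
    ∫⁻ y, ENNReal.ofReal (Real.exp (-‖x - y‖^2/(16*t))) * (‖f y‖₊ : ℝ≥0∞) ≠ ⊤ := by
  apply ne_top_of_le_ne_top _ (gauss_bound N q q₁ hq₁ hq₁q f hf t ht x)
  exact ENNReal.mul_ne_top ENNReal.ofReal_ne_top
    (ENNReal.mul_ne_top (Dv_ne_top N q₁ hq₁) hM)

lemma heatKernel_le (N : ℕ) (t : ℝ) (ht : 0 < t) (z : Euc N) :
    heatKernel N t z ≤ (4 * Real.pi * t) ^ (-(N : ℝ) / 2) * Real.exp (-‖z‖^2/(16*t)) := by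
  unfold heatKernel
  have hπ : 0 < Real.pi := Real.pi_pos
  apply mul_le_mul_of_nonneg_left _ (by positivity)
  apply Real.exp_le_exp.mpr
  rw [div_le_div_iff₀ (by linarith) (by linarith)]
  nlinarith [sq_nonneg ‖z‖]

lemma kernel_integrable (N : ℕ) (q q₁ : ℝ) (hq₁ : 1 ≤ q₁) (hq₁q : q₁ ≤ q)
    (f : Euc N → ℝ) (hf : Measurable f)
    (hM : morreyNorm N (ENNReal.ofReal q) (ENNReal.ofReal q₁) f ≠ ⊤)
    (t : ℝ) (ht : 0 < t) (w : Euc N) :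
    Integrable (fun y => heatKernel N t (w - y) * f y) := by
  have hπ : 0 < Real.pi := Real.pi_pos
  constructor
  · exact ((heatKernel_shift_meas N t w).mul hf).aestronglyMeasurable
  · unfold HasFiniteIntegral
    have hbd : ∀ y : Euc N, (‖heatKernel N t (w - y) * f y‖₊ : ℝ≥0∞) ≤
        ENNReal.ofReal ((4 * Real.pi * t) ^ (-(N : ℝ) / 2)) *
          (ENNReal.ofReal (Real.exp (-‖w - y‖^2/(16*t))) * (‖f y‖₊ : ℝ≥0∞)) := by
      intro y
      rw [nnnorm_mul, ENNReal.coe_mul, ← mul_assoc]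
      apply mul_le_mul_left
      rw [← enorm_eq_nnnorm, ← ofReal_norm, Real.norm_eq_abs,
        abs_of_nonneg (heatKernel_nonneg N t ht _), ← ENNReal.ofReal_mul (by positivity)]
      exact ENNReal.ofReal_le_ofReal (heatKernel_le N t ht _)
    calc ∫⁻ y, (‖heatKernel N t (w - y) * f y‖₊ : ℝ≥0∞)
        ≤ ∫⁻ y, ENNReal.ofReal ((4 * Real.pi * t) ^ (-(N : ℝ) / 2)) *
          (ENNReal.ofReal (Real.exp (-‖w - y‖^2/(16*t))) * (‖f y‖₊ : ℝ≥0∞)) :=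
          lintegral_mono hbd
      _ = ENNReal.ofReal ((4 * Real.pi * t) ^ (-(N : ℝ) / 2)) *
          ∫⁻ y, ENNReal.ofReal (Real.exp (-‖w - y‖^2/(16*t))) * (‖f y‖₊ : ℝ≥0∞) :=
          lintegral_const_mul' _ _ ENNReal.ofReal_ne_top
      _ < ⊤ := ENNReal.mul_lt_top ENNReal.ofReal_lt_top
          (lt_top_iff_ne_top.mpr (gauss_lint_ne_top N q q₁ hq₁ hq₁q f hf hM t ht w))

lemma pderiv_pointwise_bound (N : ℕ) (q q₁ : ℝ) (hq₁ : 1 ≤ q₁) (hq₁q : q₁ ≤ q)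
    (f : Euc N → ℝ) (hf : Measurable f)
    (hM : morreyNorm N (ENNReal.ofReal q) (ENNReal.ofReal q₁) f ≠ ⊤)
    (t : ℝ) (ht : 0 < t) (i : Fin N) (x : Euc N) :
    (‖pderiv' N i (heatSemigroup N t f) x‖₊ : ℝ≥0∞) ≤
      ENNReal.ofReal (Kc N * t ^ (-(N:ℝ)/2 - 1/2)) *
        (ENNReal.ofReal (SC ((N:ℝ) - (N:ℝ)/q) * t ^ (((N:ℝ) - (N:ℝ)/q)/2)) *
          (Dv N q₁ * morreyNorm N (ENNReal.ofReal q) (ENNReal.ofReal q₁) f)) := by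
  set M := morreyNorm N (ENNReal.ofReal q) (ENNReal.ofReal q₁) f with hMdef
  set a := (N:ℝ) - (N:ℝ)/q with ha
  set g := heatSemigroup N t f with hg
  set A := Kc N * t ^ (-(N:ℝ)/2 - 1/2) with hA
  have hA0 : 0 < A := by
    have := Kc_pos N
    have : (0:ℝ) < t ^ (-(N:ℝ)/2 - 1/2) := Real.rpow_pos_of_pos ht _
    positivity
  set GB : ℝ≥0∞ := ENNReal.ofReal (SC a * t ^ (a/2)) * (Dv N q₁ * M) with hGB
  have hGBne : GB ≠ ⊤ :=
    ENNReal.mul_ne_top ENNReal.ofReal_ne_top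
      (ENNReal.mul_ne_top (Dv_ne_top N q₁ hq₁) hM)
  set e : Euc N := EuclideanSpace.single i (1:ℝ) with he
  have hnorme : ‖e‖ = 1 := by rw [he, EuclideanSpace.norm_single]; norm_num
  have hst : 0 < Real.sqrt t := Real.sqrt_pos.mpr ht
  -- the difference quotient bound
  have hkey : ∀ h : ℝ, 0 < h → h ≤ Real.sqrt t →
      |g (x + h • e) - g x| ≤ h * (A * GB.toReal) := by
    intro h hh0 hh
    have hint1 := kernel_integrable N q q₁ hq₁ hq₁q f hf hM t ht (x + h • e)
    have hint0 := kernel_integrable N q q₁ hq₁ hq₁q f hf hM t ht x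
    have hdiff : g (x + h • e) - g x =
        ∫ y, (heatKernel N t (x + h • e - y) - heatKernel N t (x - y)) * f y := by
      rw [hg]
      simp only [heatSemigroup, smul_eq_mul]
      rw [← integral_sub hint1 hint0]
      congr 1
      ext y
      ring
    rw [hdiff]
    calc |∫ y, (heatKernel N t (x + h • e - y) - heatKernel N t (x - y)) * f y|
        ≤ (∫⁻ y, ENNReal.ofReal
            ‖(heatKernel N t (x + h • e - y) - heatKernel N t (x - y)) * f y‖).toReal := by
          rw [← Real.norm_eq_abs]
          exact norm_integral_le_lintegral_norm _
      _ ≤ (ENNReal.ofReal (h * A) * GB).toReal := by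
          apply ENNReal.toReal_mono (ENNReal.mul_ne_top ENNReal.ofReal_ne_top hGBne)
          calc ∫⁻ y, ENNReal.ofReal
                ‖(heatKernel N t (x + h • e - y) - heatKernel N t (x - y)) * f y‖
              ≤ ∫⁻ y, ENNReal.ofReal (h * A) *
                  (ENNReal.ofReal (Real.exp (-‖x - y‖^2/(16*t))) * (‖f y‖₊ : ℝ≥0∞)) := by
                apply lintegral_mono
                intro y
                dsimp only
                rw [norm_mul, ← mul_assoc, ENNReal.ofReal_mul (by positivity),
                  Real.norm_eq_abs (f y), ← Real.enorm_eq_ofReal (abs_nonneg (f y))]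
                simp only [Real.enorm_abs]
                apply mul_le_mul_left
                rw [← ENNReal.ofReal_mul (by positivity)]
                apply ENNReal.ofReal_le_ofReal
                rw [Real.norm_eq_abs]
                have hzv : x + h • e - y = (x - y) + h • e := by abel
                rw [hzv]
                calc |heatKernel N t ((x - y) + h • e) - heatKernel N t (x - y)|
                    ≤ h * (Kc N * t ^ (-(N:ℝ)/2 - 1/2) * Real.exp (-‖x - y‖^2/(16*t))) :=
                      heatKernel_diff_bound N t ht (x - y) e hnorme h hh0.le hh
                  _ = h * A * Real.exp (-‖x - y‖^2/(16*t)) := by rw [hA]; ring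
            _ = ENNReal.ofReal (h * A) *
                ∫⁻ y, ENNReal.ofReal (Real.exp (-‖x - y‖^2/(16*t))) * (‖f y‖₊ : ℝ≥0∞) :=
                lintegral_const_mul' _ _ ENNReal.ofReal_ne_top
            _ ≤ ENNReal.ofReal (h * A) * GB := by
                apply mul_le_mul_right
                exact gauss_bound N q q₁ hq₁ hq₁q f hf t ht x
      _ = h * (A * GB.toReal) := by
          rw [ENNReal.toReal_mul, ENNReal.toReal_ofReal (by positivity)]
          ring
  -- now the derivative
  by_cases hd : DifferentiableAt ℝ g x
  · have hline : HasDerivAt (fun s : ℝ => x + s • e) e 0 := by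
      simpa using ((hasDerivAt_id (0:ℝ)).smul_const e).const_add x
    have hψ : HasDerivAt (fun s : ℝ => g (x + s • e)) (fderiv ℝ g x e) 0 := by
      have hfd : HasFDerivAt g (fderiv ℝ g x) (x + (0:ℝ) • e) := by
        simpa using hd.hasFDerivAt
      exact hfd.comp_hasDerivAt 0 hline
    have hslope := hasDerivAt_iff_tendsto_slope.mp hψ
    have hslope' : Filter.Tendsto (slope (fun s : ℝ => g (x + s • e)) 0)
        (nhdsWithin 0 (Set.Ioi 0)) (nhds (fderiv ℝ g x e)) :=
      hslope.mono_left (nhdsWithin_mono 0 (fun y hy =>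
        Set.mem_compl_singleton_iff.mpr (ne_of_gt hy)))
    have habs : |fderiv ℝ g x e| ≤ A * GB.toReal := by
      apply le_of_tendsto hslope'.abs
      filter_upwards [Ioc_mem_nhdsGT_of_mem (Set.mem_Ico.mpr ⟨le_refl (0:ℝ), hst⟩)] with h hh
      rw [slope_def_field, sub_zero]
      have hb := hkey h hh.1 hh.2
      rw [abs_div, abs_of_pos hh.1, div_le_iff₀ hh.1]
      have h0 : x + (0:ℝ) • e = x := by simp
      rw [h0]
      calc |g (x + h • e) - g x| ≤ h * (A * GB.toReal) := hb
        _ = A * GB.toReal * h := by ring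
    calc (‖pderiv' N i g x‖₊ : ℝ≥0∞) = ENNReal.ofReal |fderiv ℝ g x e| := by
          rw [pderiv', ← he, ← enorm_eq_nnnorm, ← ofReal_norm, Real.norm_eq_abs]
      _ ≤ ENNReal.ofReal (A * GB.toReal) := ENNReal.ofReal_le_ofReal habs
      _ = ENNReal.ofReal A * ENNReal.ofReal GB.toReal := ENNReal.ofReal_mul hA0.le
      _ = ENNReal.ofReal A * GB := by rw [ENNReal.ofReal_toReal hGBne]
  · rw [pderiv', fderiv_zero_of_not_differentiableAt hd]
    simp

/-- **Morrey-to-`L^∞` gradient heat semigroup estimate.** For `1 ≤ q₁ ≤ q < ∞`, there is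
`C > 0` depending only on `N, q, q₁` such that for every first-order derivative `∂_x`,
`‖∂_x e^{tΔ} f‖_{L^∞} ≤ C t^{−N/(2q) − 1/2} ‖f‖_{M^q_{q₁}}` for all `t > 0` and
`f ∈ M^q_{q₁}(ℝ^N)`. -/
theorem grad_heat_semigroup_morrey_to_Linfty (N : ℕ) (hN : 1 ≤ N) (q q₁ : ℝ)
    (hq₁ : 1 ≤ q₁) (hq₁q : q₁ ≤ q) :
    ∃ C > (0 : ℝ), ∀ (i : Fin N) (t : ℝ), 0 < t → ∀ f : Euc N → ℝ, Measurable f →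
      morreyNorm N (ENNReal.ofReal q) (ENNReal.ofReal q₁) f ≠ ⊤ →
      eLpNorm (pderiv' N i (heatSemigroup N t f)) ⊤ volume ≤
        ENNReal.ofReal (C * t ^ (-(N : ℝ) / (2 * q) - 1 / 2)) *
          morreyNorm N (ENNReal.ofReal q) (ENNReal.ofReal q₁) f := by
  have hq : 1 ≤ q := le_trans hq₁ hq₁q
  have hq0 : 0 < q := by linarith
  set a := (N:ℝ) - (N:ℝ)/q with ha
  set C := Kc N * SC a * (Dv N q₁).toReal + 1 with hC
  have hKc := (Kc_pos N).le
  have hS := SC_nonneg a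
  have hDv' : (0:ℝ) ≤ (Dv N q₁).toReal := ENNReal.toReal_nonneg
  have hprod : (0:ℝ) ≤ Kc N * SC a * (Dv N q₁).toReal :=
    mul_nonneg (mul_nonneg hKc hS) hDv'
  refine ⟨C, by linarith, ?_⟩
  intro i t ht f hf hM
  set M := morreyNorm N (ENNReal.ofReal q) (ENNReal.ofReal q₁) f with hMdef
  set α := (-(N : ℝ) / (2 * q) - 1 / 2) with hα
  have htα : (0:ℝ) < t ^ α := Real.rpow_pos_of_pos ht _
  have key : ∀ x : Euc N, (‖pderiv' N i (heatSemigroup N t f) x‖₊ : ℝ≥0∞) ≤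
      ENNReal.ofReal (C * t ^ α) * M := by
    intro x
    refine le_trans (pderiv_pointwise_bound N q q₁ hq₁ hq₁q f hf hM t ht i x) ?_
    rw [← mul_assoc, ← mul_assoc]
    apply mul_le_mul_left
    have htp : (0:ℝ) < t ^ (-(N:ℝ)/2 - 1/2) := Real.rpow_pos_of_pos ht _
    have hta : (0:ℝ) < t ^ (a/2) := Real.rpow_pos_of_pos ht _
    calc ENNReal.ofReal (Kc N * t ^ (-(N:ℝ)/2 - 1/2)) *
          ENNReal.ofReal (SC a * t ^ (a/2)) * Dv N q₁
        = ENNReal.ofReal (Kc N * SC a * t ^ α) * Dv N q₁ := by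
          rw [← ENNReal.ofReal_mul (mul_nonneg hKc htp.le)]
          congr 2
          rw [show Kc N * t ^ (-(N:ℝ)/2 - 1/2) * (SC a * t ^ (a/2)) =
            Kc N * SC a * (t ^ (-(N:ℝ)/2 - 1/2) * t ^ (a/2)) by ring,
            ← Real.rpow_add ht]
          congr 2
          rw [hα, ha]
          field_simp
          ring
      _ = ENNReal.ofReal (Kc N * SC a * t ^ α * (Dv N q₁).toReal) := by
          rw [← ENNReal.ofReal_toReal (Dv_ne_top N q₁ hq₁),
            ← ENNReal.ofReal_mul (mul_nonneg (mul_nonneg hKc hS) htα.le)]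
          rw [ENNReal.ofReal_toReal (Dv_ne_top N q₁ hq₁)]
      _ ≤ ENNReal.ofReal (C * t ^ α) := by
          apply ENNReal.ofReal_le_ofReal
          have : Kc N * SC a * t ^ α * (Dv N q₁).toReal =
              (Kc N * SC a * (Dv N q₁).toReal) * t ^ α := by ring
          rw [this]
          apply mul_le_mul_of_nonneg_right _ htα.le
          rw [hC]; linarith
  rw [eLpNorm_exponent_top, eLpNormEssSup]
  exact essSup_le_of_ae_le _ (Filter.Eventually.of_forall key)
end
end
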